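/- Let $\gamma>1$. Then there exists a constant $C>0$ such that for all $\rho\ge 0$: $\big|2h(\rho)-(\rho-1)^2\big|\le C\,|\rho-1|^3\,\big(1+\rho^{(\gamma-3)^+}\big)$, where $(\gamma-3)^+=\max\{\gamma-3,0\}$. -/

import Mathlib

noncomputable section

/-- Internal energy `h(ρ) = (ρ^γ - 1 - γ(ρ-1)) / (γ(γ-1))` (real powers). -/
def hfun (γ ρ : ℝ) : ℝ := (ρ ^ γ - 1 - γ * (ρ - 1)) / (γ * (γ - 1))

/-- Mean value inequality on `uIcc a b`. -/
private lemma mvt_abs {f f' : ℝ → ℝ} {a b B : ℝ}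
    (hd : ∀ x ∈ Set.uIcc a b, HasDerivAt f (f' x) x)
    (hB : ∀ x ∈ Set.uIcc a b, |f' x| ≤ B) :
    |f b - f a| ≤ B * |b - a| := by
  have := Convex.norm_image_sub_le_of_norm_hasDerivWithin_le
    (f := f) (f' := f') (s := Set.uIcc a b) (C := B)
    (fun x hx => (hd x hx).hasDerivWithinAt) (fun x hx => by simpa using hB x hx)
    (convex_uIcc a b) Set.left_mem_uIcc Set.right_mem_uIcc
  simpa [Real.norm_eq_abs] using this

private lemma abs_sub_one_le {ρ x : ℝ} (hx : x ∈ Set.uIcc 1 ρ) : |x - 1| ≤ |ρ - 1| := by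
  rcases le_total 1 ρ with h | h
  · rw [Set.uIcc_of_le h] at hx
    rw [abs_of_nonneg (by linarith [hx.1]), abs_of_nonneg (by linarith)]
    linarith [hx.2]
  · rw [Set.uIcc_of_ge h] at hx
    rw [abs_of_nonpos (by linarith [hx.2]), abs_of_nonpos (by linarith)]
    linarith [hx.1]

/-- Key Taylor-type estimate for `ρ ≥ 1/2`. -/
private lemma key_est (γ : ℝ) (hγ : 1 < γ) (ρ : ℝ) (hρ : 1/2 ≤ ρ) :
    |ρ ^ γ - 1 - γ * (ρ - 1) - γ * (γ - 1) / 2 * (ρ - 1) ^ 2| ≤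
      4 * γ * (γ - 1) * |γ - 2| * (1 + ρ ^ max (γ - 3) 0) * |ρ - 1| ^ 3 := by
  set P : ℝ := ρ ^ max (γ - 3) 0 with hP
  have hρ0 : (0:ℝ) < ρ := by linarith
  have hPnn : 0 ≤ P := Real.rpow_nonneg hρ0.le _
  -- every point of uIcc 1 ρ is positive and ≥ 1/2
  have hmem : ∀ x ∈ Set.uIcc 1 ρ, 1/2 ≤ x ∧ x ≤ max 1 ρ := by
    intro x hx
    rcases le_total 1 ρ with h | h
    · rw [Set.uIcc_of_le h] at hx
      exact ⟨by linarith [hx.1], le_trans hx.2 (le_max_right _ _)⟩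
    · rw [Set.uIcc_of_ge h] at hx
      exact ⟨by linarith [hx.1], le_trans hx.2 (le_max_left _ _)⟩
  -- bound on t^(γ-3)
  have hKbound : ∀ x ∈ Set.uIcc 1 ρ, x ^ (γ - 3) ≤ 4 * (1 + P) := by
    intro x hx
    obtain ⟨hx1, hx2⟩ := hmem x hx
    have hx0 : (0:ℝ) < x := by linarith
    rcases le_total 0 (γ - 3) with he | he
    · -- γ ≥ 3 : monotone in base
      have h1 : x ^ (γ - 3) ≤ (max 1 ρ) ^ (γ - 3) :=
        Real.rpow_le_rpow hx0.le hx2 he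
      have h2 : (max 1 ρ) ^ (γ - 3) ≤ 1 + P := by
        rcases le_total ρ 1 with h | h
        · rw [max_eq_left h, Real.one_rpow]; linarith
        · rw [max_eq_right h, hP, max_eq_left he]; linarith [Real.rpow_nonneg hρ0.le (γ-3)]
      nlinarith [Real.rpow_nonneg hρ0.le (max (γ-3) 0)]
    · -- γ ≤ 3 : antitone in base, x ≥ 1/2
      have h1 : x ^ (γ - 3) ≤ (1/2 : ℝ) ^ (γ - 3) :=
        Real.rpow_le_rpow_of_nonpos (by norm_num) hx1 he
      have h2 : (1/2 : ℝ) ^ (γ - 3) = 2 ^ (3 - γ) := by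
        rw [show (1/2 : ℝ) = 2⁻¹ by norm_num, Real.inv_rpow (by norm_num : (0:ℝ) ≤ 2),
          ← Real.rpow_neg (by norm_num : (0:ℝ) ≤ 2)]
        congr 1; ring
      have h3 : (2:ℝ) ^ (3 - γ) ≤ 2 ^ (2:ℝ) :=
        Real.rpow_le_rpow_of_exponent_le (by norm_num) (by linarith)
      have h4 : (2:ℝ) ^ (2:ℝ) = 4 := by
        rw [show (2:ℝ) = ((2:ℕ):ℝ) from by norm_num, Real.rpow_natCast]; norm_num
      have : x ^ (γ - 3) ≤ 4 := by rw [h2] at h1; linarith [h3, h1, h4.le]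
      nlinarith
  -- derivative facts
  have hd3 : ∀ x : ℝ, x ≠ 0 → HasDerivAt (fun t : ℝ => t ^ (γ - 2))
      ((γ - 2) * x ^ (γ - 3)) x := by
    intro x hx
    have := Real.hasDerivAt_rpow_const (p := γ - 2) (Or.inl hx)
    convert this using 2
    ring_nf
  have hd2 : ∀ x : ℝ, x ≠ 0 → HasDerivAt
      (fun t : ℝ => γ * t ^ (γ - 1) - γ - γ * (γ - 1) * (t - 1))
      (γ * (γ - 1) * (x ^ (γ - 2) - 1)) x := by
    intro x hx
    have h1 := (Real.hasDerivAt_rpow_const (p := γ - 1) (Or.inl hx)).const_mul γ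
    have h2 : HasDerivAt (fun t : ℝ => γ * (γ - 1) * (t - 1)) (γ * (γ - 1)) x := by
      simpa using ((hasDerivAt_id x).sub_const 1).const_mul (γ * (γ - 1))
    have := (h1.sub_const γ).sub h2
    convert this using 1
    any_goals rfl
    rw [show γ - 1 - 1 = γ - 2 by ring]
    ring
  have hd1 : ∀ x : ℝ, x ≠ 0 → HasDerivAt
      (fun t : ℝ => t ^ γ - 1 - γ * (t - 1) - γ * (γ - 1) / 2 * (t - 1) ^ 2)
      (γ * x ^ (γ - 1) - γ - γ * (γ - 1) * (x - 1)) x := by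
    intro x hx
    have h1 := Real.hasDerivAt_rpow_const (p := γ) (Or.inl hx)
    have h2 : HasDerivAt (fun t : ℝ => γ * (t - 1)) γ x := by
      simpa using ((hasDerivAt_id x).sub_const 1).const_mul γ
    have h3 : HasDerivAt (fun t : ℝ => γ * (γ - 1) / 2 * (t - 1) ^ 2)
        (γ * (γ - 1) * (x - 1)) x := by
      have := (((hasDerivAt_id x).sub_const 1).pow 2).const_mul (γ * (γ - 1) / 2)
      convert this using 1
      any_goals rfl
      simp only [id_eq]; push_cast; ring
    exact ((h1.sub_const 1).sub h2).sub h3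
  -- positivity of points
  have hne : ∀ x ∈ Set.uIcc 1 ρ, x ≠ 0 := fun x hx => by
    have := (hmem x hx).1; positivity
  set K : ℝ := 4 * (1 + P) with hK
  have hKnn : 0 ≤ K := by positivity
  -- Step A : |x^(γ-2) - 1| ≤ |γ-2| * K * |x-1|
  have stepA : ∀ x ∈ Set.uIcc 1 ρ, |x ^ (γ - 2) - 1| ≤ |γ - 2| * K * |x - 1| := by
    intro x hx
    have hsub : Set.uIcc 1 x ⊆ Set.uIcc 1 ρ :=
      Set.uIcc_subset_uIcc Set.left_mem_uIcc hx
    have := mvt_abs (f := fun t : ℝ => t ^ (γ - 2))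
      (f' := fun t => (γ - 2) * t ^ (γ - 3)) (a := 1) (b := x) (B := |γ - 2| * K)
      (fun t ht => hd3 t (hne t (hsub ht)))
      (fun t ht => by
        rw [abs_mul]
        have h1 := hKbound t (hsub ht)
        have h2 : 0 ≤ t ^ (γ - 3) := Real.rpow_nonneg (by linarith [(hmem t (hsub ht)).1]) _
        rw [abs_of_nonneg h2]
        exact mul_le_mul_of_nonneg_left h1 (abs_nonneg _))
    simpa [Real.one_rpow] using this
  -- Step B : |g' x| ≤ γ(γ-1)|γ-2| K |ρ-1| |x-1|
  have stepB : ∀ x ∈ Set.uIcc 1 ρ,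
      |γ * x ^ (γ - 1) - γ - γ * (γ - 1) * (x - 1)| ≤
        γ * (γ - 1) * |γ - 2| * K * |ρ - 1| * |x - 1| := by
    intro x hx
    have hsub : Set.uIcc 1 x ⊆ Set.uIcc 1 ρ :=
      Set.uIcc_subset_uIcc Set.left_mem_uIcc hx
    have := mvt_abs (f := fun t : ℝ => γ * t ^ (γ - 1) - γ - γ * (γ - 1) * (t - 1))
      (f' := fun t => γ * (γ - 1) * (t ^ (γ - 2) - 1)) (a := 1) (b := x)
      (B := γ * (γ - 1) * (|γ - 2| * K * |ρ - 1|))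
      (fun t ht => hd2 t (hne t (hsub ht)))
      (fun t ht => by
        rw [abs_mul, abs_of_nonneg (by nlinarith : (0:ℝ) ≤ γ * (γ - 1))]
        have h1 := stepA t (hsub ht)
        have h2 : |t - 1| ≤ |ρ - 1| := abs_sub_one_le (hsub ht)
        have h3 : |γ - 2| * K * |t - 1| ≤ |γ - 2| * K * |ρ - 1| :=
          mul_le_mul_of_nonneg_left h2 (by positivity)
        exact mul_le_mul_of_nonneg_left (h1.trans h3) (by nlinarith))
    have heval : γ * (1:ℝ) ^ (γ - 1) - γ - γ * (γ - 1) * ((1:ℝ) - 1) = 0 := by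
      rw [Real.one_rpow]; ring
    calc |γ * x ^ (γ - 1) - γ - γ * (γ - 1) * (x - 1)|
        = |(γ * x ^ (γ - 1) - γ - γ * (γ - 1) * (x - 1)) -
            (γ * (1:ℝ) ^ (γ - 1) - γ - γ * (γ - 1) * ((1:ℝ) - 1))| := by rw [heval]; ring_nf
      _ ≤ γ * (γ - 1) * (|γ - 2| * K * |ρ - 1|) * |x - 1| := this
      _ = γ * (γ - 1) * |γ - 2| * K * |ρ - 1| * |x - 1| := by ring
  -- Step C : final
  have hγγ' : (0:ℝ) ≤ γ * (γ - 1) := by nlinarith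
  have hA : (0:ℝ) ≤ γ * (γ - 1) * |γ - 2| * K * |ρ - 1| :=
    mul_nonneg (mul_nonneg (mul_nonneg hγγ' (abs_nonneg _)) hKnn) (abs_nonneg _)
  have stepC := mvt_abs
    (f := fun t : ℝ => t ^ γ - 1 - γ * (t - 1) - γ * (γ - 1) / 2 * (t - 1) ^ 2)
    (f' := fun t => γ * t ^ (γ - 1) - γ - γ * (γ - 1) * (t - 1)) (a := 1) (b := ρ)
    (B := γ * (γ - 1) * |γ - 2| * K * |ρ - 1| * |ρ - 1|)
    (fun t ht => hd1 t (hne t ht))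
    (fun t ht => by
      have h1 := stepB t ht
      have h2 : |t - 1| ≤ |ρ - 1| := abs_sub_one_le ht
      calc |γ * t ^ (γ - 1) - γ - γ * (γ - 1) * (t - 1)|
          ≤ γ * (γ - 1) * |γ - 2| * K * |ρ - 1| * |t - 1| := h1
        _ ≤ γ * (γ - 1) * |γ - 2| * K * |ρ - 1| * |ρ - 1| :=
            mul_le_mul_of_nonneg_left h2 hA)
  have h0 : (1:ℝ) ^ γ - 1 - γ * ((1:ℝ) - 1) - γ * (γ - 1) / 2 * ((1:ℝ) - 1) ^ 2 = 0 := by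
    rw [Real.one_rpow]; ring
  calc |ρ ^ γ - 1 - γ * (ρ - 1) - γ * (γ - 1) / 2 * (ρ - 1) ^ 2|
      = |(ρ ^ γ - 1 - γ * (ρ - 1) - γ * (γ - 1) / 2 * (ρ - 1) ^ 2) -
          ((1:ℝ) ^ γ - 1 - γ * ((1:ℝ) - 1) - γ * (γ - 1) / 2 * ((1:ℝ) - 1) ^ 2)| := by
        rw [h0, sub_zero]
    _ ≤ γ * (γ - 1) * |γ - 2| * K * |ρ - 1| * |ρ - 1| * |ρ - 1| := stepC
    _ = 4 * γ * (γ - 1) * |γ - 2| * (1 + P) * |ρ - 1| ^ 3 := by rw [hK]; ring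

/-- For `γ > 1` there is `C > 0` with
`|2h(ρ) - (ρ-1)²| ≤ C |ρ-1|³ (1 + ρ^((γ-3)⁺))` for all `ρ ≥ 0`. -/
theorem stmt_10 (γ : ℝ) (hγ : 1 < γ) :
    ∃ C > 0, ∀ ρ : ℝ, 0 ≤ ρ →
      |2 * hfun γ ρ - (ρ - 1) ^ 2| ≤ C * |ρ - 1| ^ 3 * (1 + ρ ^ max (γ - 3) 0) := by
  have hγ0 : (0:ℝ) < γ := by linarith
  have hγ1 : (0:ℝ) < γ - 1 := by linarith
  have hden : γ * (γ - 1) ≠ 0 := by positivity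
  set D : ℝ := 2 * (2 + γ) / (γ * (γ - 1)) + 1 with hD
  have hDpos : 0 < D := by positivity
  clear_value D
  refine ⟨8 * |γ - 2| + 8 * D + 1, by positivity, fun ρ hρ => ?_⟩
  set P : ℝ := ρ ^ max (γ - 3) 0 with hP
  have hPnn : 0 ≤ P := Real.rpow_nonneg hρ _
  clear_value P
  have hrw : 2 * hfun γ ρ - (ρ - 1) ^ 2 =
      2 * (ρ ^ γ - 1 - γ * (ρ - 1) - γ * (γ - 1) / 2 * (ρ - 1) ^ 2) / (γ * (γ - 1)) := by
    rw [hfun]; field_simp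
  have hγγ : (0:ℝ) < γ * (γ - 1) := by nlinarith
  rcases le_or_gt (1/2 : ℝ) ρ with hcase | hcase
  · -- main case: use key_est
    have hkey := key_est γ hγ ρ hcase
    rw [← hP] at hkey
    rw [hrw, abs_div, abs_mul, abs_of_nonneg hγγ.le, abs_two, div_le_iff₀ hγγ]
    have h5 : (0:ℝ) ≤ γ * (γ - 1) * ((1 + P) * |ρ - 1| ^ 3) :=
      mul_nonneg hγγ.le (mul_nonneg (by linarith) (by positivity))
    have h6 : (0:ℝ) ≤ (8 * D + 1) * (γ * (γ - 1) * ((1 + P) * |ρ - 1| ^ 3)) :=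
      mul_nonneg (by positivity) h5
    have hring : (8 * |γ - 2| + 8 * D + 1) * |ρ - 1| ^ 3 * (1 + P) * (γ * (γ - 1)) =
        2 * (4 * γ * (γ - 1) * |γ - 2| * (1 + P) * |ρ - 1| ^ 3) +
          (8 * D + 1) * (γ * (γ - 1) * ((1 + P) * |ρ - 1| ^ 3)) := by ring
    linarith [hkey, h6, hring]
  · -- small ρ : crude bound
    have hργ : ρ ^ γ ≤ 1 := Real.rpow_le_one hρ (by linarith) hγ0.le
    have hργ0 : 0 ≤ ρ ^ γ := Real.rpow_nonneg hρ _
    have h1 : |ρ ^ γ - 1 - γ * (ρ - 1)| ≤ 2 + γ := by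
      rw [abs_le]; constructor <;> nlinarith
    have hLHS : |2 * hfun γ ρ - (ρ - 1) ^ 2| ≤ D := by
      have hsum : |2 * hfun γ ρ - (ρ - 1) ^ 2| ≤ |2 * hfun γ ρ| + |(ρ - 1) ^ 2| :=
        abs_sub _ _
      have h2 : |2 * hfun γ ρ| = 2 * |ρ ^ γ - 1 - γ * (ρ - 1)| / (γ * (γ - 1)) := by
        rw [hfun, abs_mul, abs_div, abs_of_nonneg hγγ.le]
        norm_num; ring
      have h3 : |(ρ - 1) ^ 2| ≤ 1 := by
        rw [abs_of_nonneg (by positivity)]; nlinarith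
      have h4 : 2 * |ρ ^ γ - 1 - γ * (ρ - 1)| / (γ * (γ - 1)) ≤
          2 * (2 + γ) / (γ * (γ - 1)) := by
        rw [div_le_div_iff₀ hγγ hγγ]
        nlinarith [mul_nonneg (sub_nonneg.mpr h1) hγγ.le]
      rw [h2] at hsum
      calc |2 * hfun γ ρ - (ρ - 1) ^ 2| ≤ _ := hsum
        _ ≤ 2 * (2 + γ) / (γ * (γ - 1)) + 1 := by linarith
        _ = D := hD.symm
    have habs : (1:ℝ)/2 ≤ |ρ - 1| := by
      rw [abs_of_nonpos (by linarith)]; linarith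
    have habs3 : (1:ℝ)/8 ≤ |ρ - 1| ^ 3 := by
      have hp := pow_le_pow_left₀ (by norm_num : (0:ℝ) ≤ 1/2) habs 3
      norm_num at hp; linarith
    have hCpos : (0:ℝ) < 8 * |γ - 2| + 8 * D + 1 := by positivity
    have e1 : D ≤ (8 * |γ - 2| + 8 * D + 1) * |ρ - 1| ^ 3 := by
      have e0 : (8 * |γ - 2| + 8 * D + 1) * (1/8 : ℝ) ≤
          (8 * |γ - 2| + 8 * D + 1) * |ρ - 1| ^ 3 :=
        mul_le_mul_of_nonneg_left habs3 hCpos.le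
      nlinarith [abs_nonneg (γ - 2)]
    have e2 : (8 * |γ - 2| + 8 * D + 1) * |ρ - 1| ^ 3 ≤
        (8 * |γ - 2| + 8 * D + 1) * |ρ - 1| ^ 3 * (1 + P) :=
      le_mul_of_one_le_right (by positivity) (by linarith)
    linarith [hLHS]
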